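/- arXiv:1601.00047 — 2 statements merged into one kernel-verified Lean document; each statement's English description precedes it below -/
import Mathlib

section
/- If A = (ℂ[z_1,…,z_n], {,}) is a symmetric iterated T-Poisson Ore extension, then with respect to the same T-action A is a T-Poisson Ore extension in the reversed order of the variables: for each 2 ≤ k ≤ n, ℂ[z_1,…,z_{k−1}] is a Poisson subalgebra of A, and {f, z_k} = a'_k(f) z_k + b'_k(f) for all f ∈ ℂ[z_1,…,z_{k−1}], where a'_k = h'_k|_{ℂ[z_1,…,z_{k−1}]} and b'_k is the unique derivation of ℂ[z_1,…,z_{k−1}] with b'_k(z_i) = b_i(z_k) ∈ ℂ[z_{i+1},…,z_{k−1}] for 1 ≤ i ≤ k−1. Moreover, for any h ∈ Lie(T), [h|_{ℂ[z_1,…,z_{k−1}]}, b'_k] = λ_k(h) b'_k as derivations of ℂ[z_1,…,z_{k−1}]. -/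
noncomputable section

open MvPolynomial

/-- The polynomial algebra `ℂ[z_1,…,z_n]`, with `z_i = X i`. -/
abbrev PA (n : ℕ) := MvPolynomial (Fin n) ℂ

/-- The subalgebra `ℂ[z_{i+1},…,z_n]` of `ℂ[z_1,…,z_n]`. -/
def tailAlg (n : ℕ) (i : Fin n) : Subalgebra ℂ (PA n) :=
  MvPolynomial.supported ℂ {j : Fin n | i < j}

/-- The subalgebra `ℂ[z_1,…,z_{k-1}]` of `ℂ[z_1,…,z_n]`. -/
def headAlg (n : ℕ) (k : Fin n) : Subalgebra ℂ (PA n) :=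
  MvPolynomial.supported ℂ {j : Fin n | j < k}

/-- `d` restricts to a (ℂ-linear) derivation of the subalgebra `S`. -/
def IsDerivOn {n : ℕ} (S : Subalgebra ℂ (PA n)) (d : PA n → PA n) : Prop :=
  (∀ x ∈ S, d x ∈ S) ∧ (∀ x y : PA n, d (x + y) = d x + d y) ∧
    (∀ (c : ℂ) (x : PA n), d (c • x) = c • d x) ∧
    ∀ x ∈ S, ∀ y ∈ S, d (x * y) = x * d y + y * d x

/-- The derivation of `ℂ[z_1,…,z_n]` by which `h ∈ 𝔱 = Lie(T)` acts, for the rational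
torus action under which each `z_j` is a weight vector of weight `λ_j`:
`h(z_j) = λ_j(h) z_j`. -/
def actD {n : ℕ} {𝔱 : Type*} [AddCommGroup 𝔱] [Module ℂ 𝔱]
    (lam : Fin n → (𝔱 →ₗ[ℂ] ℂ)) (h : 𝔱) : PA n → PA n := fun f =>
  (MvPolynomial.mkDerivation ℂ fun j => lam j h • (X j : PA n)) f

section Aux

variable {n : ℕ} {𝔱 : Type*} [AddCommGroup 𝔱] [Module ℂ 𝔱]
  (lam : Fin n → (𝔱 →ₗ[ℂ] ℂ))

lemma actD_X (t : 𝔱) (j : Fin n) : actD lam t (X j) = lam j t • X j :=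
  MvPolynomial.mkDerivation_X _ _ _

lemma actD_add (t : 𝔱) (x y : PA n) :
    actD lam t (x + y) = actD lam t x + actD lam t y := map_add _ x y

lemma actD_smul (t : 𝔱) (c : ℂ) (x : PA n) :
    actD lam t (c • x) = c • actD lam t x :=
  Derivation.map_smul (MvPolynomial.mkDerivation ℂ fun j => lam j t • (X j : PA n)) c x

lemma actD_sub (t : 𝔱) (x y : PA n) :
    actD lam t (x - y) = actD lam t x - actD lam t y := map_sub _ x y

lemma actD_mul (t : 𝔱) (x y : PA n) :
    actD lam t (x * y) = x * actD lam t y + y * actD lam t x := by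
  show (MvPolynomial.mkDerivation ℂ fun j => lam j t • (X j : PA n)) (x * y) = _
  rw [Derivation.leibniz]
  simp [smul_eq_mul, actD]

lemma actD_C (t : 𝔱) (c : ℂ) : actD lam t (C c) = 0 := by
  have : (C c : PA n) = algebraMap ℂ (PA n) c := rfl
  rw [show actD lam t (C c)
      = (MvPolynomial.mkDerivation ℂ fun j => lam j t • (X j : PA n)) (algebraMap ℂ (PA n) c)
    from rfl]
  exact Derivation.map_algebraMap _ c

lemma actD_comm (t s : 𝔱) (f : PA n) :
    actD lam t (actD lam s f) = actD lam s (actD lam t f) := by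
  have hz : ⁅(MvPolynomial.mkDerivation ℂ fun j => lam j t • (X j : PA n)),
      (MvPolynomial.mkDerivation ℂ fun j => lam j s • (X j : PA n))⁆ = 0 := by
    apply MvPolynomial.derivation_ext
    intro j
    rw [Derivation.commutator_apply, MvPolynomial.mkDerivation_X, MvPolynomial.mkDerivation_X,
      Derivation.map_smul, Derivation.map_smul, MvPolynomial.mkDerivation_X,
      MvPolynomial.mkDerivation_X, smul_comm]
    simp
  have h0 : ⁅(MvPolynomial.mkDerivation ℂ fun j => lam j t • (X j : PA n)),
      (MvPolynomial.mkDerivation ℂ fun j => lam j s • (X j : PA n))⁆ f = 0 := by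
    rw [hz]; simp
  rw [Derivation.commutator_apply] at h0
  exact sub_eq_zero.mp h0

/-- A derivation of the full polynomial ring preserves `supported ℂ s` if it maps the
generators into it. -/
lemma deriv_mem (s : Set (Fin n)) (d : PA n → PA n)
    (hadd : ∀ x y : PA n, d (x + y) = d x + d y)
    (hC : ∀ c : ℂ, d (C c) = 0)
    (hmul : ∀ x y : PA n, d (x * y) = x * d y + y * d x)
    (hX : ∀ i ∈ s, d (X i) ∈ MvPolynomial.supported ℂ s) :
    ∀ f ∈ MvPolynomial.supported ℂ s, d f ∈ MvPolynomial.supported ℂ s := by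
  intro f hf
  have hf' : f ∈ Algebra.adjoin ℂ (MvPolynomial.X '' s) := hf
  induction hf' using Algebra.adjoin_induction with
  | mem x hx => obtain ⟨i, hi, rfl⟩ := hx; exact hX i hi
  | algebraMap r =>
      rw [show (algebraMap ℂ (PA n) r) = C r from rfl, hC]
      exact Subalgebra.zero_mem _
  | add x y hx hy ihx ihy => rw [hadd]; exact add_mem (ihx hx) (ihy hy)
  | mul x y hx hy ihx ihy =>
      rw [hmul]
      exact add_mem (mul_mem hx (ihy hy)) (mul_mem hy (ihx hx))

end Aux

/-- Lemma 5.7 of the paper.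
Setting (Definition 5.4, in infinitesimal form): `A = (ℂ[z_1,…,z_n], pb)` is a polynomial
Poisson algebra (`hadd`, `hsmul`, `hskew`, `hleib`, `hjac`) with a rational action of a
complex algebraic torus `T` by Poisson automorphisms (`hact`), for which each `z_i` is a
weight vector of weight `λ_i` (elements `h` of `𝔱 = Lie(T)` acting by the derivation
`actD lam h`, with `actD lam h (z_j) = λ_j(h) z_j`).  `A` is an iterated `T`-Poisson Ore
extension: for `1 ≤ i ≤ n-1` (i.e. `(i:ℕ)+1 < n` in `0`-indexed form) there are
derivations `a_i, b_i` of `ℂ[z_{i+1},…,z_n]` with `{z_i, f} = z_i a_i(f) + b_i(f)` and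
elements `h_i ∈ 𝔱` with `λ_i(h_i) ≠ 0` and `a_i = h_i|_{ℂ[z_{i+1},…,z_n]}`
(`ha_deriv`, `hb_deriv`, `hore`, `hlam_h`, `ha_h`); and it is *symmetric*:
`b_i(z_k) ∈ ℂ[z_{i+1},…,z_{k-1}]` for `i < k` (`hb_mem`), and there are `h'_2,…,h'_n ∈ 𝔱`
with `λ_i(h'_i) ≠ 0` for `2 ≤ i ≤ n` and `λ_i(h'_k) = λ_k(h_i)` for `i < k`
(`hlam_h'`, `hlam_hk'`).

Conclusion: with respect to the same `T`-action, `A` is a `T`-Poisson Ore extension in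
the reversed order of the variables: for each `2 ≤ k ≤ n` (i.e. `0 < (k:ℕ)`),
`ℂ[z_1,…,z_{k-1}]` is a Poisson subalgebra of `A`, and
`{f, z_k} = a'_k(f) z_k + b'_k(f)` for all `f ∈ ℂ[z_1,…,z_{k-1}]`, where
`a'_k = h'_k|_{ℂ[z_1,…,z_{k-1}]}` and `b'_k` is the unique derivation of
`ℂ[z_1,…,z_{k-1}]` with `b'_k(z_i) = b_i(z_k)` for `1 ≤ i ≤ k-1`; moreover for every
`h ∈ Lie(T)`, `[h|_{ℂ[z_1,…,z_{k-1}]}, b'_k] = λ_k(h) b'_k` as derivations of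
`ℂ[z_1,…,z_{k-1}]`. -/
theorem statement_17
    (n : ℕ) (𝔱 : Type*) [AddCommGroup 𝔱] [Module ℂ 𝔱]
    (lam : Fin n → (𝔱 →ₗ[ℂ] ℂ))
    (pb : PA n → PA n → PA n)
    (hadd : ∀ f g h : PA n, pb (f + g) h = pb f h + pb g h)
    (hsmul : ∀ (c : ℂ) (f g : PA n), pb (c • f) g = c • pb f g)
    (hskew : ∀ f g : PA n, pb f g = - pb g f)
    (hleib : ∀ f g h : PA n, pb f (g * h) = pb f g * h + g * pb f h)
    (hjac : ∀ f g h : PA n, pb f (pb g h) + pb g (pb h f) + pb h (pb f g) = 0)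
    (hact : ∀ (t : 𝔱) (f g : PA n),
      actD lam t (pb f g) = pb (actD lam t f) g + pb f (actD lam t g))
    (a b : Fin n → PA n → PA n) (h : Fin n → 𝔱)
    (ha_deriv : ∀ i : Fin n, (i : ℕ) + 1 < n → IsDerivOn (tailAlg n i) (a i))
    (hb_deriv : ∀ i : Fin n, (i : ℕ) + 1 < n → IsDerivOn (tailAlg n i) (b i))
    (hore : ∀ i : Fin n, (i : ℕ) + 1 < n →
      ∀ f ∈ tailAlg n i, pb (X i) f = X i * a i f + b i f)
    (hlam_h : ∀ i : Fin n, (i : ℕ) + 1 < n → lam i (h i) ≠ 0)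
    (ha_h : ∀ i : Fin n, (i : ℕ) + 1 < n → ∀ f ∈ tailAlg n i, a i f = actD lam (h i) f)
    (hb_mem : ∀ i k : Fin n, i < k →
      b i (X k) ∈ MvPolynomial.supported ℂ {j : Fin n | i < j ∧ j < k})
    (h' : Fin n → 𝔱)
    (hlam_h' : ∀ i : Fin n, 0 < (i : ℕ) → lam i (h' i) ≠ 0)
    (hlam_hk' : ∀ i k : Fin n, i < k → lam i (h' k) = lam k (h i)) :
    ∀ k : Fin n, 0 < (k : ℕ) →
      (∀ f ∈ headAlg n k, ∀ g ∈ headAlg n k, pb f g ∈ headAlg n k) ∧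
      ∃ b' : PA n → PA n,
        IsDerivOn (headAlg n k) b' ∧
        (∀ i : Fin n, i < k → b' (X i) = b i (X k)) ∧
        (∀ b'' : PA n → PA n, IsDerivOn (headAlg n k) b'' →
          (∀ i : Fin n, i < k → b'' (X i) = b i (X k)) →
          ∀ f ∈ headAlg n k, b'' f = b' f) ∧
        (∀ f ∈ headAlg n k, pb f (X k) = actD lam (h' k) f * X k + b' f) ∧
        (∀ t : 𝔱, ∀ f ∈ headAlg n k,
          actD lam t (b' f) - b' (actD lam t f) = lam k t • b' f) := by

  -- basic consequences of the Poisson axioms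
  have pb0l : ∀ g : PA n, pb 0 g = 0 := by
    intro g
    have := hsmul 0 0 g
    simpa using this
  have pbsmulr : ∀ (c : ℂ) (f g : PA n), pb f (c • g) = c • pb f g := by
    intro c f g
    rw [hskew, hsmul, ← smul_neg, ← hskew]
  have hleib' : ∀ f g x : PA n, pb (f * g) x = pb f x * g + f * pb g x := by
    intro f g x
    rw [hskew, hleib, neg_add, hskew x f, hskew x g]
    ring
  have pb1 : ∀ g : PA n, pb 1 g = 0 := by
    intro g
    have h1 : pb (1:PA n) g = pb 1 g + pb 1 g := by
      have := hleib' 1 1 g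
      simpa using this
    exact (right_eq_add.mp h1)
  have pbC : ∀ (c : ℂ) (g : PA n), pb (C c) g = 0 := by
    intro c g
    have : (C c : PA n) = c • (1 : PA n) := by
      rw [MvPolynomial.smul_eq_C_mul, mul_one]
    rw [this, hsmul, pb1, smul_zero]
  have pbCr : ∀ (c : ℂ) (g : PA n), pb g (C c) = 0 := by
    intro c g
    rw [hskew, pbC, neg_zero]
  have pbaddr : ∀ f x y : PA n, pb f (x + y) = pb f x + pb f y := by
    intro f x y
    rw [hskew, hadd, neg_add, ← hskew, ← hskew]
  have pbself : ∀ f : PA n, pb f f = 0 := by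
    intro f
    have h1 : pb f f + pb f f = 0 := by
      nth_rewrite 2 [hskew]
      simp
    have h2 : (2 : ℂ) • pb f f = 0 := by rw [two_smul]; exact h1
    rcases smul_eq_zero.mp h2 with h3 | h3
    · exact absurd h3 (by norm_num)
    · exact h3
  intro k hk
  -- membership of generators
  have hXmem : ∀ i : Fin n, i < k → X i ∈ headAlg n k := by
    intro i hik
    exact MvPolynomial.X_mem_supported.mpr hik
  -- key base case
  have key : ∀ i j : Fin n, i < k → j < k → i < j → pb (X i) (X j) ∈ headAlg n k := by
    intro i j hik hjk hij
    have hin : (i : ℕ) + 1 < n := lt_of_le_of_lt (Nat.succ_le_of_lt hij) j.isLt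
    have hXj : X j ∈ tailAlg n i := MvPolynomial.X_mem_supported.mpr hij
    rw [hore i hin _ hXj, ha_h i hin _ hXj, actD_X]
    refine add_mem (mul_mem (hXmem i hik) (Subalgebra.smul_mem _ (hXmem j hjk) _)) ?_
    have hsub : {l : Fin n | i < l ∧ l < j} ⊆ {l : Fin n | l < k} := by
      intro l hl
      exact lt_trans hl.2 hjk
    exact MvPolynomial.supported_mono hsub (hb_mem i j hij)
  have keyXX : ∀ i j : Fin n, i < k → j < k → pb (X i) (X j) ∈ headAlg n k := by
    intro i j hik hjk
    rcases lt_trichotomy i j with hij | hij | hij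
    · exact key i j hik hjk hij
    · rw [hij, pbself]; exact Subalgebra.zero_mem _
    · rw [hskew]
      exact neg_mem (key j i hjk hik hij)
  -- closure under pb with X i on the left
  have keyXg : ∀ i : Fin n, i < k → ∀ g ∈ headAlg n k, pb (X i) g ∈ headAlg n k := by
    intro i hik g hg
    have hg' : g ∈ Algebra.adjoin ℂ (MvPolynomial.X '' {j : Fin n | j < k}) := hg
    induction hg' using Algebra.adjoin_induction with
    | mem x hx => obtain ⟨j, hj, rfl⟩ := hx; exact keyXX i j hik hj
    | algebraMap r =>
        rw [show (algebraMap ℂ (PA n) r) = C r from rfl, pbCr]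
        exact Subalgebra.zero_mem _
    | add x y hx hy ihx ihy =>
        rw [pbaddr]; exact add_mem (ihx hx) (ihy hy)
    | mul x y hx hy ihx ihy =>
        rw [hleib]
        exact add_mem (mul_mem (ihx hx) hy) (mul_mem hx (ihy hy))
  have closure : ∀ f ∈ headAlg n k, ∀ g ∈ headAlg n k, pb f g ∈ headAlg n k := by
    intro f hf
    have hf' : f ∈ Algebra.adjoin ℂ (MvPolynomial.X '' {j : Fin n | j < k}) := hf
    induction hf' using Algebra.adjoin_induction with
    | mem x hx =>
        obtain ⟨i, hi, rfl⟩ := hx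
        intro g hg
        exact keyXg i hi g hg
    | algebraMap r =>
        intro g hg
        rw [show (algebraMap ℂ (PA n) r) = C r from rfl, pbC]
        exact Subalgebra.zero_mem _
    | add x y hx hy ihx ihy =>
        intro g hg
        rw [hadd]
        exact add_mem (ihx hx g hg) (ihy hy g hg)
    | mul x y hx hy ihx ihy =>
        intro g hg
        rw [hleib']
        exact add_mem (mul_mem (ihx hx g hg) hy) (mul_mem hx (ihy hy g hg))
  -- the derivation b'
  set D' : PA n → PA n := fun f => pb f (X k) - actD lam (h' k) f * X k with hD'
  have D'add : ∀ x y : PA n, D' (x + y) = D' x + D' y := by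
    intro x y
    simp only [hD', hadd, actD_add]
    ring
  have D'smul : ∀ (c : ℂ) (x : PA n), D' (c • x) = c • D' x := by
    intro c x
    simp only [hD', hsmul, actD_smul, smul_sub, smul_mul_assoc]
  have D'mul : ∀ x y : PA n, D' (x * y) = x * D' y + y * D' x := by
    intro x y
    simp only [hD', hleib', actD_mul]
    ring
  have D'C : ∀ c : ℂ, D' (C c) = 0 := by
    intro c
    simp only [hD', pbC, actD_C, zero_mul, sub_zero]
  have D'X : ∀ i : Fin n, i < k → D' (X i) = b i (X k) := by
    intro i hik
    have hin : (i : ℕ) + 1 < n := lt_of_le_of_lt (Nat.succ_le_of_lt hik) k.isLt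
    have hXk : X k ∈ tailAlg n i := MvPolynomial.X_mem_supported.mpr hik
    simp only [hD']
    rw [hore i hin _ hXk, ha_h i hin _ hXk, actD_X, actD_X, hlam_hk' i k hik,
      MvPolynomial.smul_eq_C_mul, MvPolynomial.smul_eq_C_mul]
    ring
  have D'memX : ∀ i : Fin n, i ∈ {j : Fin n | j < k} → D' (X i) ∈
      MvPolynomial.supported ℂ {j : Fin n | j < k} := by
    intro i hik
    rw [D'X i hik]
    have hsub : {l : Fin n | i < l ∧ l < k} ⊆ {l : Fin n | l < k} := fun l hl => hl.2
    exact MvPolynomial.supported_mono hsub (hb_mem i k hik)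
  have D'mem : ∀ f ∈ headAlg n k, D' f ∈ headAlg n k :=
    deriv_mem {j : Fin n | j < k} D' D'add D'C D'mul D'memX
  refine ⟨closure, D', ⟨D'mem, D'add, D'smul, fun x _ y _ => D'mul x y⟩, D'X, ?_, ?_, ?_⟩
  · -- uniqueness
    intro b'' hb'' hb''X f hf
    obtain ⟨hbm, hba, hbs, hbl⟩ := hb''
    have hb1 : b'' 1 = 0 := by
      have h1 : b'' (1 : PA n) = b'' 1 + b'' 1 := by
        have := hbl 1 (Subalgebra.one_mem _) 1 (Subalgebra.one_mem _)
        simpa using this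
      exact (right_eq_add.mp h1)
    have hf' : f ∈ Algebra.adjoin ℂ (MvPolynomial.X '' {j : Fin n | j < k}) := hf
    induction hf' using Algebra.adjoin_induction with
    | mem x hx =>
        obtain ⟨i, hi, rfl⟩ := hx
        rw [hb''X i hi, D'X i hi]
    | algebraMap r =>
        have hC1 : (algebraMap ℂ (PA n) r) = r • (1 : PA n) := by
          rw [MvPolynomial.smul_eq_C_mul, mul_one]; rfl
        rw [hC1, hbs, hb1, smul_zero, D'smul, hD']
        simp [pb1, actD_C, show actD lam (h' k) (1 : PA n) = 0 by
          simpa using actD_C lam (h' k) 1]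
    | add x y hx hy ihx ihy =>
        rw [hba, D'add, ihx hx, ihy hy]
    | mul x y hx hy ihx ihy =>
        rw [hbl x hx y hy, D'mul, ihx hx, ihy hy]
  · -- Ore relation
    intro f hf
    simp only [hD']
    ring
  · -- commutator relation
    intro t f hf
    simp only [hD']
    rw [actD_sub, hact t f (X k), actD_X, pbsmulr, actD_mul, actD_X, actD_comm,
      smul_sub]
    simp only [MvPolynomial.smul_eq_C_mul]
    ring
end
end

section
/- Let V be a finite-dimensional vector space, π ∈ ∧²V, and let V₁, V₂ be subspaces of V such that π(ξ, ζ) = 0 for all ξ in the annihilator V₁⁰ ⊂ V* and ζ in the annihilator V₂⁰ ⊂ V*. For j = 1, 2 let ρ_j: V → V/V_j be the projection (inducing ρ_j: ∧²V → ∧²(V/V_j)). Suppose U ⊂ V is coisotropic with respect to π (i.e. π ∈ U ∧ V) and that ρ₁|_U: U → V/V₁ is a linear isomorphism. Let ψ = ρ₂ ∘ (ρ₁|_U)^{−1}: V/V₁ → V/V₂. Then the induced map on bivectors satisfies ψ(ρ₁(π)) = −ρ₂(π). -/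
noncomputable section

/-- The alternating `2`-form `(v,w) ↦ ξ(v)ζ(w) - ξ(w)ζ(v)` on `V` attached to two
covectors `ξ, ζ ∈ V*`. -/
def altForm2 {V : Type*} [AddCommGroup V] [Module ℂ V] (ξ ζ : Module.Dual ℂ V) :
    V [⋀^Fin 2]→ₗ[ℂ] ℂ :=
  MultilinearMap.alternatization
    ((MultilinearMap.mkPiAlgebra ℂ (Fin 2) ℂ).compLinearMap ![ξ, ζ])

/-- Evaluation of a bivector `π ∈ ⋀²V ⊆ ExteriorAlgebra ℂ V` on a pair of covectors
`ξ, ζ ∈ V*`: `π(ξ,ζ)`.  (It vanishes on all other graded pieces.) -/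
def evalBivec {V : Type*} [AddCommGroup V] [Module ℂ V] (ξ ζ : Module.Dual ℂ V) :
    ExteriorAlgebra ℂ V →ₗ[ℂ] ℂ :=
  ExteriorAlgebra.liftAlternating
    (Function.update (0 : ∀ i, V [⋀^Fin i]→ₗ[ℂ] ℂ) 2 (altForm2 ξ ζ))

/-- The subspace `U₁ ∧ U₂` of `⋀²V` spanned by the wedges `u ∧ w`, `u ∈ U₁`, `w ∈ U₂`
(inside the exterior algebra).  A subspace `U ⊆ V` is *coisotropic* with respect to
`π ∈ ⋀²V` if `π ∈ U ∧ V`. -/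
def wedgeSub {V : Type*} [AddCommGroup V] [Module ℂ V] (U₁ U₂ : Submodule ℂ V) :
    Submodule ℂ (ExteriorAlgebra ℂ V) :=
  Submodule.span ℂ
    {x | ∃ u ∈ U₁, ∃ w ∈ U₂, x = ExteriorAlgebra.ι ℂ u * ExteriorAlgebra.ι ℂ w}

variable {V : Type*} [AddCommGroup V] [Module ℂ V]

lemma altForm2_apply (ξ ζ : Module.Dual ℂ V) (v w : V) :
    altForm2 ξ ζ ![v, w] = ξ v * ζ w - ξ w * ζ v := by
  rw [altForm2, MultilinearMap.alternatization_apply]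
  rw [show (Finset.univ : Finset (Equiv.Perm (Fin 2))) = {1, Equiv.swap 0 1} from by decide]
  rw [Finset.sum_insert (by decide), Finset.sum_singleton]
  simp [MultilinearMap.domDomCongr_apply, Fin.prod_univ_two, Equiv.swap_apply_left,
    Equiv.swap_apply_right, sub_eq_add_neg]

lemma evalBivec_ι_mul_ι (ξ ζ : Module.Dual ℂ V) (v w : V) :
    evalBivec ξ ζ (ExteriorAlgebra.ι ℂ v * ExteriorAlgebra.ι ℂ w) = ξ v * ζ w - ξ w * ζ v := by
  rw [evalBivec, ExteriorAlgebra.liftAlternating_ι_mul, ExteriorAlgebra.liftAlternating_ι]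
  show (Function.update (0 : ∀ i, V [⋀^Fin i]→ₗ[ℂ] ℂ) 2 (altForm2 ξ ζ) 2).curryLeft v ![w] = _
  rw [Function.update_self]
  show altForm2 ξ ζ (Matrix.vecCons v ![w]) = _
  rw [show (Matrix.vecCons v ![w]) = ![v, w] from rfl]
  exact altForm2_apply ξ ζ v w

open ExteriorAlgebra in
lemma ι_mul_ι_mem_pow2 (v w : V) : ι ℂ v * ι ℂ w ∈ ⋀[ℂ]^2 V := by
  rw [← ExteriorAlgebra.ιMulti_span_fixedDegree]
  apply Submodule.subset_span
  exact ⟨![v, w], by simp [ExteriorAlgebra.ιMulti_succ_apply, Matrix.vecTail]⟩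

open ExteriorAlgebra in
lemma ext_on_pow2 {W : Type*} [AddCommGroup W] [Module ℂ W]
    (f g : ExteriorAlgebra ℂ V →ₗ[ℂ] W)
    (h : ∀ v w : V, f (ι ℂ v * ι ℂ w) = g (ι ℂ v * ι ℂ w))
    {x : ExteriorAlgebra ℂ V} (hx : x ∈ ⋀[ℂ]^2 V) : f x = g x := by
  rw [← ExteriorAlgebra.ιMulti_span_fixedDegree] at hx
  induction hx using Submodule.span_induction with
  | mem x hx =>
      obtain ⟨v, rfl⟩ := hx
      have : ιMulti ℂ 2 v = ι ℂ (v 0) * ι ℂ (v 1) := by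
        simp [ExteriorAlgebra.ιMulti_succ_apply, Matrix.vecTail]
      rw [this]; exact h _ _
  | zero => simp
  | add x y _ _ hx hy => simp [map_add, hx, hy]
  | smul c x _ hx => simp [map_smul, hx]

open ExteriorAlgebra in
lemma evalBivec_antisym (ξ ζ : Module.Dual ℂ V) {x : ExteriorAlgebra ℂ V}
    (hx : x ∈ ⋀[ℂ]^2 V) : evalBivec ζ ξ x = - evalBivec ξ ζ x := by
  have := ext_on_pow2 (evalBivec ζ ξ) (-evalBivec ξ ζ)
    (fun v w => by simp [evalBivec_ι_mul_ι]; ring) hx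
  simpa using this

open ExteriorAlgebra in
lemma evalBivec_sub_left (a a' b : Module.Dual ℂ V) {x : ExteriorAlgebra ℂ V}
    (hx : x ∈ ⋀[ℂ]^2 V) :
    evalBivec (a - a') b x = evalBivec a b x - evalBivec a' b x := by
  have := ext_on_pow2 (evalBivec (a - a') b) (evalBivec a b - evalBivec a' b)
    (fun v w => by simp [evalBivec_ι_mul_ι]; ring) hx
  simpa using this

open ExteriorAlgebra in
lemma evalBivec_sub_right (a b b' : Module.Dual ℂ V) {x : ExteriorAlgebra ℂ V}
    (hx : x ∈ ⋀[ℂ]^2 V) :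
    evalBivec a (b - b') x = evalBivec a b x - evalBivec a b' x := by
  have := ext_on_pow2 (evalBivec a (b - b')) (evalBivec a b - evalBivec a b')
    (fun v w => by simp [evalBivec_ι_mul_ι]; ring) hx
  simpa using this

open ExteriorAlgebra in
lemma evalBivec_map {W : Type*} [AddCommGroup W] [Module ℂ W]
    (f : V →ₗ[ℂ] W) (ξ ζ : Module.Dual ℂ W) {x : ExteriorAlgebra ℂ V}
    (hx : x ∈ ⋀[ℂ]^2 V) :
    evalBivec ξ ζ (ExteriorAlgebra.map f x) = evalBivec (ξ ∘ₗ f) (ζ ∘ₗ f) x := by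
  have := ext_on_pow2 ((evalBivec ξ ζ) ∘ₗ (ExteriorAlgebra.map f).toLinearMap)
    (evalBivec (ξ ∘ₗ f) (ζ ∘ₗ f))
    (fun v w => by
      simp [map_mul, ExteriorAlgebra.map_apply_ι, evalBivec_ι_mul_ι]) hx
  simpa using this

open ExteriorAlgebra in
lemma map_mem_pow2 {W : Type*} [AddCommGroup W] [Module ℂ W]
    (f : V →ₗ[ℂ] W) {x : ExteriorAlgebra ℂ V} (hx : x ∈ ⋀[ℂ]^2 V) :
    ExteriorAlgebra.map f x ∈ ⋀[ℂ]^2 W := by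
  rw [← ExteriorAlgebra.ιMulti_span_fixedDegree] at hx
  induction hx using Submodule.span_induction with
  | mem x hx =>
      obtain ⟨v, rfl⟩ := hx
      have : ιMulti ℂ 2 v = ι ℂ (v 0) * ι ℂ (v 1) := by
        simp [ExteriorAlgebra.ιMulti_succ_apply, Matrix.vecTail]
      rw [this, map_mul, ExteriorAlgebra.map_apply_ι, ExteriorAlgebra.map_apply_ι]
      exact ι_mul_ι_mem_pow2 _ _
  | zero => simp
  | add x y _ _ hx hy => rw [map_add]; exact Submodule.add_mem _ hx hy
  | smul c x _ hx => rw [map_smul]; exact Submodule.smul_mem _ _ hx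

open ExteriorAlgebra in
lemma mem_span_pairs {W : Type*} [AddCommGroup W] [Module ℂ W] {n : ℕ} (b : Module.Basis (Fin n) ℂ W)
    {x : ExteriorAlgebra ℂ W} (hx : x ∈ ⋀[ℂ]^2 W) :
    x ∈ Submodule.span ℂ
      (Set.range fun p : Fin n × Fin n => ι ℂ (b p.1) * ι ℂ (b p.2)) := by
  rw [← ExteriorAlgebra.ιMulti_span_fixedDegree] at hx
  induction hx using Submodule.span_induction with
  | mem y hy =>
      obtain ⟨v, rfl⟩ := hy
      have hv : ιMulti ℂ 2 v = ι ℂ (v 0) * ι ℂ (v 1) := by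
        simp [ExteriorAlgebra.ιMulti_succ_apply, Matrix.vecTail]
      rw [hv, ← b.sum_repr (v 0), ← b.sum_repr (v 1), map_sum, map_sum,
        Finset.sum_mul_sum]
      apply Submodule.sum_mem
      intro i _
      apply Submodule.sum_mem
      intro j _
      rw [map_smul, map_smul, smul_mul_smul_comm]
      exact Submodule.smul_mem _ _ (Submodule.subset_span ⟨(i, j), rfl⟩)
  | zero => exact Submodule.zero_mem _
  | add y z _ _ hy hz => exact Submodule.add_mem _ hy hz
  | smul c y _ hy => exact Submodule.smul_mem _ _ hy

open ExteriorAlgebra in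
lemma pow2_eq_zero_of_eval {W : Type*} [AddCommGroup W] [Module ℂ W] [FiniteDimensional ℂ W]
    {x : ExteriorAlgebra ℂ W} (hx : x ∈ ⋀[ℂ]^2 W)
    (h : ∀ ξ ζ : Module.Dual ℂ W, evalBivec ξ ζ x = 0) : x = 0 := by
  classical
  set n := Module.finrank ℂ W
  set b : Module.Basis (Fin n) ℂ W := Module.finBasis ℂ W with hb
  set g : Fin n × Fin n → ExteriorAlgebra ℂ W :=
    fun p => ι ℂ (b p.1) * ι ℂ (b p.2) with hg
  obtain ⟨c, hc⟩ := (Submodule.mem_span_range_iff_exists_fun ℂ).mp (mem_span_pairs b hx)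
  -- Step 2: symmetry of coefficients
  have hsym : ∀ i j : Fin n, c (i, j) = c (j, i) := by
    intro i j
    have := h (b.coord i) (b.coord j)
    rw [← hc, map_sum] at this
    have heval : ∀ p : Fin n × Fin n,
        evalBivec (b.coord i) (b.coord j) (c p • g p) =
          c p * ((if p.1 = i then 1 else 0) * (if p.2 = j then 1 else 0)
            - (if p.2 = i then 1 else 0) * (if p.1 = j then 1 else 0)) := by
      intro p
      rw [map_smul, hg, evalBivec_ι_mul_ι]
      simp [Module.Basis.coord_apply, Module.Basis.repr_self, Finsupp.single_apply, smul_eq_mul]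
    rw [Finset.sum_congr rfl (fun p _ => heval p), Fintype.sum_prod_type] at this
    simp only [mul_sub, mul_ite, mul_one, mul_zero, ite_mul, zero_mul,
      Finset.sum_sub_distrib, Finset.sum_ite_eq, Finset.sum_ite_eq',
      Finset.mem_univ, if_true] at this
    have hrest : (∑ x : Fin n, ∑ y : Fin n,
        if x = j then if y = i then c (x, y) else 0 else 0) = c (j, i) := by
      rw [Finset.sum_eq_single j (fun x _ hx => by simp [hx]) (by simp)]
      simp
    rw [hrest, sub_eq_zero] at this
    exact this
  -- Step 3: x = -x
  have hswap : ∀ p : Fin n × Fin n, g (p.2, p.1) = - g p := by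
    intro p
    exact eq_neg_of_add_eq_zero_right (ExteriorAlgebra.ι_add_mul_swap (b p.1) (b p.2))
  have hx2 : x = - x := by
    calc x = ∑ p : Fin n × Fin n, c p • g p := hc.symm
    _ = ∑ p : Fin n × Fin n, c (p.2, p.1) • g (p.2, p.1) :=
        Fintype.sum_equiv (Equiv.prodComm _ _) _ _ (fun p => rfl)
    _ = ∑ p : Fin n × Fin n, c p • (- g p) := by
        refine Finset.sum_congr rfl fun p _ => ?_
        rw [hswap p, hsym p.2 p.1]
    _ = - ∑ p : Fin n × Fin n, c p • g p := by simp
    _ = - x := by rw [hc]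
  have h2 : (2 : ℂ) • x = 0 := by
    rw [two_smul]
    exact add_eq_zero_iff_eq_neg.mpr hx2
  rcases smul_eq_zero.mp h2 with h' | h'
  · exact absurd h' two_ne_zero
  · exact h'

end

noncomputable section

/-- Lemma A.2 of the paper.
Let `V` be a finite-dimensional vector space, `π ∈ ⋀²V` (an element of the exterior
algebra lying in the second exterior power), and let `V₁, V₂ ⊆ V` be subspaces such that
`π(ξ, ζ) = 0` for all `ξ` in the annihilator `V₁⁰ ⊆ V*` and `ζ` in the annihilator
`V₂⁰ ⊆ V*`.  For `j = 1, 2` let `ρ_j : V → V/V_j` be the projection, inducing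
`ExteriorAlgebra.map ρ_j` on bivectors.  Suppose `U ⊆ V` is coisotropic with respect to
`π` (i.e. `π ∈ U ∧ V`) and `ρ₁|_U : U → V/V₁` is a linear isomorphism (hypothesis
`hbij`), and let `ψ = ρ₂ ∘ (ρ₁|_U)⁻¹ : V/V₁ → V/V₂`.  Then the induced map on bivectors
satisfies `ψ(ρ₁(π)) = -ρ₂(π)`. -/
theorem statement_19
    (V : Type*) [AddCommGroup V] [Module ℂ V] [FiniteDimensional ℂ V]
    (π : ExteriorAlgebra ℂ V) (hπ : π ∈ ⋀[ℂ]^2 V)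
    (V₁ V₂ : Submodule ℂ V)
    (hpair : ∀ ξ ∈ V₁.dualAnnihilator, ∀ ζ ∈ V₂.dualAnnihilator, evalBivec ξ ζ π = 0)
    (U : Submodule ℂ V)
    (hco : π ∈ wedgeSub U ⊤)
    (hbij : Function.Bijective (V₁.mkQ ∘ₗ U.subtype)) :
    ExteriorAlgebra.map
        (V₂.mkQ ∘ₗ U.subtype ∘ₗ
          (LinearEquiv.ofBijective (V₁.mkQ ∘ₗ U.subtype) hbij).symm.toLinearMap)
        (ExteriorAlgebra.map V₁.mkQ π) =
      - ExteriorAlgebra.map V₂.mkQ π := by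
  classical
  set e := LinearEquiv.ofBijective (V₁.mkQ ∘ₗ U.subtype) hbij with he
  set P : V →ₗ[ℂ] V := U.subtype ∘ₗ e.symm.toLinearMap ∘ₗ V₁.mkQ with hP
  -- P fixes U and kills V₁
  have hPu : ∀ u ∈ U, P u = u := by
    intro u hu
    have h1 : e ⟨u, hu⟩ = V₁.mkQ u := rfl
    have h2 : e.symm (V₁.mkQ u) = ⟨u, hu⟩ := by rw [← h1, e.symm_apply_apply]
    have h3 : P u = U.subtype (e.symm (V₁.mkQ u)) := rfl
    rw [h3, h2]
    rfl
  have hPV₁ : ∀ v ∈ V₁, P v = 0 := by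
    intro v hv
    have h1 : V₁.mkQ v = 0 := (Submodule.Quotient.mk_eq_zero V₁).mpr hv
    have h3 : P v = U.subtype (e.symm (V₁.mkQ v)) := rfl
    rw [h3, h1]
    simp
  -- rewrite the composite map
  have hmaps : ExteriorAlgebra.map (V₂.mkQ ∘ₗ U.subtype ∘ₗ e.symm.toLinearMap)
      (ExteriorAlgebra.map V₁.mkQ π) = ExteriorAlgebra.map (V₂.mkQ ∘ₗ P) π := by
    calc ExteriorAlgebra.map (V₂.mkQ ∘ₗ U.subtype ∘ₗ e.symm.toLinearMap)
          (ExteriorAlgebra.map V₁.mkQ π)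
        = (AlgHom.comp (ExteriorAlgebra.map (V₂.mkQ ∘ₗ U.subtype ∘ₗ e.symm.toLinearMap))
            (ExteriorAlgebra.map V₁.mkQ)) π := rfl
      _ = ExteriorAlgebra.map ((V₂.mkQ ∘ₗ U.subtype ∘ₗ e.symm.toLinearMap) ∘ₗ V₁.mkQ) π := by
            rw [ExteriorAlgebra.map_comp_map]
      _ = ExteriorAlgebra.map (V₂.mkQ ∘ₗ P) π := by congr 1
  rw [hmaps, eq_neg_iff_add_eq_zero]
  apply pow2_eq_zero_of_eval
    (Submodule.add_mem _ (map_mem_pow2 _ hπ) (map_mem_pow2 _ hπ))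
  intro ξ ζ
  rw [map_add, evalBivec_map _ _ _ hπ, evalBivec_map _ _ _ hπ]
  set a := ξ ∘ₗ V₂.mkQ with ha
  set bb := ζ ∘ₗ V₂.mkQ with hbb
  have hξ : ξ ∘ₗ V₂.mkQ ∘ₗ P = a ∘ₗ P := rfl
  have hζ : ζ ∘ₗ V₂.mkQ ∘ₗ P = bb ∘ₗ P := rfl
  rw [hξ, hζ]
  -- annihilator memberships
  have ha_mem : a ∈ V₂.dualAnnihilator := by
    rw [Submodule.mem_dualAnnihilator]
    intro v hv
    simp [ha, LinearMap.comp_apply, (Submodule.Quotient.mk_eq_zero V₂).mpr hv]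
  have hbb_mem : bb ∈ V₂.dualAnnihilator := by
    rw [Submodule.mem_dualAnnihilator]
    intro v hv
    simp [hbb, LinearMap.comp_apply, (Submodule.Quotient.mk_eq_zero V₂).mpr hv]
  have haP_mem : a ∘ₗ P ∈ V₁.dualAnnihilator := by
    rw [Submodule.mem_dualAnnihilator]
    intro v hv
    simp [LinearMap.comp_apply, hPV₁ v hv]
  have hbbP_mem : bb ∘ₗ P ∈ V₁.dualAnnihilator := by
    rw [Submodule.mem_dualAnnihilator]
    intro v hv
    simp [LinearMap.comp_apply, hPV₁ v hv]
  -- coisotropy: (a - a∘P, bb - bb∘P) kills π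
  have hcoeval' : ∀ y ∈ wedgeSub U ⊤, evalBivec (a - a ∘ₗ P) (bb - bb ∘ₗ P) y = 0 := by
    intro y hy
    rw [wedgeSub] at hy
    induction hy using Submodule.span_induction with
    | mem y hy =>
        obtain ⟨u, hu, w, -, rfl⟩ := hy
        rw [evalBivec_ι_mul_ι]
        simp [LinearMap.sub_apply, LinearMap.comp_apply, hPu u hu]
    | zero => simp
    | add y z _ _ hy hz => simp [map_add, hy, hz]
    | smul c y _ hy => simp [map_smul, hy]
  have hcoeval : evalBivec (a - a ∘ₗ P) (bb - bb ∘ₗ P) π = 0 := hcoeval' π hco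
  -- expand and conclude
  rw [evalBivec_sub_left _ _ _ hπ, evalBivec_sub_right _ _ _ hπ,
    evalBivec_sub_right _ _ _ hπ] at hcoeval
  have h1 : evalBivec (a ∘ₗ P) bb π = 0 := hpair _ haP_mem _ hbb_mem
  have h2 : evalBivec (bb ∘ₗ P) a π = 0 := hpair _ hbbP_mem _ ha_mem
  have h3 : evalBivec a (bb ∘ₗ P) π = 0 := by
    rw [evalBivec_antisym _ _ hπ, h2, neg_zero]
  linear_combination hcoeval + h1 + h3
end
end
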